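/- Let f : ℝⁿ → ℝ be twice continuously differentiable and suppose its Hessian H_f(x) is positive definite for every x ∈ ℝⁿ. Let T > 0, x₀ ∈ ℝⁿ, and consider the weighted action J_N(x) = ∫₀ᵀ ( (1/2)⟨H_f(x(t))⁻¹ ∇f(x(t)), ∇f(x(t))⟩ + (1/2)⟨H_f(x(t)) ẋ(t), ẋ(t)⟩ ) dt + f(x(T)) over continuously differentiable paths x : [0,T] → ℝⁿ with x(0) = x₀. Then J_N(x) = f(x₀) + (1/2)∫₀ᵀ ⟨H_f(x(t))(ẋ(t) + H_f(x(t))⁻¹∇f(x(t))), ẋ(t) + H_f(x(t))⁻¹∇f(x(t))⟩ dt ≥ f(x₀), and if x* solves the continuous-time Newton flow ẋ*(t) = −H_f(x*(t))⁻¹ ∇f(x*(t)), x*(0) = x₀, then J_N(x*) = f(x₀), so the Newton flow is the optimal evolution for this weighted control problem. -/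

import Mathlib

open MeasureTheory Real intervalIntegral RealInnerProductSpace

/-- The weighted (Newton) action
`J_N(x, x') = ∫₀ᵀ ((1/2)⟪H(x t)⁻¹ ∇f(x t), ∇f(x t)⟫ + (1/2)⟪H(x t) x' t, x' t⟫) dt + f (x T)`,
where `H x` is the Hessian of `f` at `x` and `Hinv x` its inverse. -/
noncomputable def newtonAction {n : ℕ} (f : EuclideanSpace ℝ (Fin n) → ℝ)
    (H Hinv : EuclideanSpace ℝ (Fin n) →
      (EuclideanSpace ℝ (Fin n) →L[ℝ] EuclideanSpace ℝ (Fin n)))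
    (T : ℝ) (x x' : ℝ → EuclideanSpace ℝ (Fin n)) : ℝ :=
  (∫ t in (0 : ℝ)..T,
      ((1 / 2) * ⟪Hinv (x t) (gradient f (x t)), gradient f (x t)⟫
        + (1 / 2) * ⟪H (x t) (x' t), x' t⟫)) + f (x T)

/-- Let `f : ℝⁿ → ℝ` be `C²` with everywhere positive definite Hessian
`H_f` (with inverse `Hinv`). For every `C¹` path `x` with `x 0 = x₀`:
`J_N(x) = f x₀ + (1/2)∫₀ᵀ ⟪H(x t)(x' t + H(x t)⁻¹∇f(x t)), x' t + H(x t)⁻¹∇f(x t)⟫ dt ≥ f x₀`,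
and if `x⋆` solves the continuous-time Newton flow `ẋ⋆ = -H(x⋆)⁻¹∇f(x⋆)`, `x⋆ 0 = x₀`, then
`J_N(x⋆) = f x₀`: Newton's flow is the optimal evolution of the weighted control problem. -/
theorem newton_flow_optimal {n : ℕ}
    (f : EuclideanSpace ℝ (Fin n) → ℝ) (hf : ContDiff ℝ 2 f)
    (H Hinv : EuclideanSpace ℝ (Fin n) →
      (EuclideanSpace ℝ (Fin n) →L[ℝ] EuclideanSpace ℝ (Fin n)))
    (hHess : ∀ y, HasFDerivAt (gradient f) (H y) y)
    (hpos : ∀ y v, v ≠ 0 → 0 < ⟪H y v, v⟫)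
    (hinv₁ : ∀ y, (Hinv y).comp (H y) = ContinuousLinearMap.id ℝ (EuclideanSpace ℝ (Fin n)))
    (hinv₂ : ∀ y, (H y).comp (Hinv y) = ContinuousLinearMap.id ℝ (EuclideanSpace ℝ (Fin n)))
    (T : ℝ) (hT : 0 < T) (x₀ : EuclideanSpace ℝ (Fin n))
    (x x' : ℝ → EuclideanSpace ℝ (Fin n))
    (hx : ∀ t ∈ Set.Icc (0 : ℝ) T, HasDerivAt x (x' t) t)
    (hx' : ContinuousOn x' (Set.Icc (0 : ℝ) T))
    (hx0 : x 0 = x₀)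
    (xs : ℝ → EuclideanSpace ℝ (Fin n)) (hxs0 : xs 0 = x₀) :
    newtonAction f H Hinv T x x'
        = f x₀ + (1 / 2) * ∫ t in (0 : ℝ)..T,
            ⟪H (x t) (x' t + Hinv (x t) (gradient f (x t))),
              x' t + Hinv (x t) (gradient f (x t))⟫
      ∧ newtonAction f H Hinv T x x' ≥ f x₀
      ∧ ((∀ t ∈ Set.Icc (0 : ℝ) T,
            HasDerivAt xs (-(Hinv (xs t) (gradient f (xs t)))) t) →
          newtonAction f H Hinv T xs (fun t => -(Hinv (xs t) (gradient f (xs t)))) = f x₀) := by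
  have hfd : Differentiable ℝ f := hf.differentiable (by norm_num)
  have hgradf : ∀ y v, fderiv ℝ f y v = ⟪gradient f y, v⟫ := by
    intro y v
    rw [show fderiv ℝ f y = InnerProductSpace.toDual ℝ _ (gradient f y) from
      ((InnerProductSpace.toDual ℝ _).apply_symm_apply _).symm]
    exact InnerProductSpace.toDual_apply_apply
  have hsymm : ∀ y v w, ⟪H y v, w⟫ = ⟪H y w, v⟫ := by
    intro y v w
    set L : EuclideanSpace ℝ (Fin n) →L[ℝ] (EuclideanSpace ℝ (Fin n) →L[ℝ] ℝ) :=
      (InnerProductSpace.toDual ℝ _).toLinearIsometry.toContinuousLinearMap with hLdef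
    have hL : ∀ u v, L u v = ⟪u, v⟫ := fun u v => rfl
    have h1 : ∀ z, HasFDerivAt f (L (gradient f z)) z := by
      intro z
      have h := (hfd z).hasFDerivAt
      convert h using 1
      ext v
      rw [hgradf, hL]
    have h2 : HasFDerivAt (fun z => L (gradient f z)) (L.comp (H y)) y :=
      L.hasFDerivAt.comp y (hHess y)
    have := second_derivative_symmetric h1 h2 v w
    simpa [hL] using this
  have hHw : ∀ y u, H y (Hinv y u) = u := by
    intro y u
    have := ContinuousLinearMap.ext_iff.mp (hinv₂ y) u
    simpa using this
  -- continuity facts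
  have hgc : Continuous (gradient f) :=
    Differentiable.continuous (fun y => (hHess y).differentiableAt)
  have hfderiv_cd : ContDiff ℝ 1 (fderiv ℝ f) := hf.fderiv_right (by norm_num)
  have hgrad_cd : ContDiff ℝ 1 (gradient f) := by
    have : gradient f = fun y => (InnerProductSpace.toDual ℝ _).symm (fderiv ℝ f y) := rfl
    rw [this]
    exact (InnerProductSpace.toDual ℝ _).symm.toContinuousLinearEquiv.toContinuousLinearMap.contDiff.comp hfderiv_cd
  have hHc : Continuous H := by
    have : H = fderiv ℝ (gradient f) := funext fun y => ((hHess y).fderiv).symm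
    rw [this]
    exact hgrad_cd.continuous_fderiv one_ne_zero
  have hHinvc : Continuous Hinv := by
    have heq : Hinv = fun y => Ring.inverse (H y) := by
      funext y
      exact (Ring.inverse_unit ⟨H y, Hinv y, hinv₂ y, hinv₁ y⟩).symm
    rw [heq]
    refine continuous_iff_continuousAt.mpr fun y => ?_
    have h1 : ContinuousAt Ring.inverse (H y) :=
      NormedRing.inverse_continuousAt ⟨H y, Hinv y, hinv₂ y, hinv₁ y⟩
    exact h1.comp hHc.continuousAt
  have hIcc : Set.uIcc (0 : ℝ) T = Set.Icc 0 T := Set.uIcc_of_le hT.le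
  -- generic key lemma
  have key : ∀ (p p' : ℝ → EuclideanSpace ℝ (Fin n)),
      (∀ t ∈ Set.Icc (0 : ℝ) T, HasDerivAt p (p' t) t) →
      ContinuousOn p' (Set.Icc (0 : ℝ) T) →
      newtonAction f H Hinv T p p'
        = f (p 0) + (1 / 2) * ∫ t in (0 : ℝ)..T,
            ⟪H (p t) (p' t + Hinv (p t) (gradient f (p t))),
              p' t + Hinv (p t) (gradient f (p t))⟫ := by
    intro p p' hp hp'
    have hpc : ContinuousOn p (Set.Icc (0 : ℝ) T) :=
      fun t ht => ((hp t ht).continuousAt).continuousWithinAt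
    have hgpc : ContinuousOn (fun t => gradient f (p t)) (Set.Icc (0 : ℝ) T) :=
      hgc.comp_continuousOn hpc
    have hQc : ContinuousOn (fun t =>
        ⟪H (p t) (p' t + Hinv (p t) (gradient f (p t))),
          p' t + Hinv (p t) (gradient f (p t))⟫) (Set.Icc (0 : ℝ) T) := by
      have hvc : ContinuousOn (fun t => p' t + Hinv (p t) (gradient f (p t)))
          (Set.Icc (0 : ℝ) T) :=
        hp'.add (((hHinvc.comp_continuousOn hpc)).clm_apply hgpc)
      exact ((hHc.comp_continuousOn hpc).clm_apply hvc).inner hvc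
    have hBc : ContinuousOn (fun t => ⟪gradient f (p t), p' t⟫) (Set.Icc (0 : ℝ) T) :=
      hgpc.inner hp'
    have hQi : IntervalIntegrable (fun t =>
        ⟪H (p t) (p' t + Hinv (p t) (gradient f (p t))),
          p' t + Hinv (p t) (gradient f (p t))⟫) volume 0 T :=
      (hQc.mono (by rw [hIcc])).intervalIntegrable
    have hBi : IntervalIntegrable (fun t => ⟪gradient f (p t), p' t⟫) volume 0 T :=
      (hBc.mono (by rw [hIcc])).intervalIntegrable
    have hftc : (∫ t in (0:ℝ)..T, ⟪gradient f (p t), p' t⟫) = f (p T) - f (p 0) := by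
      apply intervalIntegral.integral_eq_sub_of_hasDerivAt
      · intro t ht
        rw [hIcc] at ht
        have := ((hfd (p t)).hasFDerivAt).comp_hasDerivAt t (hp t ht)
        rw [hgradf] at this
        exact this
      · exact hBi
    have hpt : ∀ t, (1 / 2) * ⟪Hinv (p t) (gradient f (p t)), gradient f (p t)⟫
        + (1 / 2) * ⟪H (p t) (p' t), p' t⟫
        = (1 / 2) * ⟪H (p t) (p' t + Hinv (p t) (gradient f (p t))),
            p' t + Hinv (p t) (gradient f (p t))⟫ - ⟪gradient f (p t), p' t⟫ := by
      intro t
      set g := gradient f (p t)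
      set w := Hinv (p t) g
      have h1 : H (p t) (p' t + w) = H (p t) (p' t) + g := by
        rw [map_add, hHw]
      rw [h1, inner_add_left, inner_add_right, inner_add_right]
      have h2 : ⟪H (p t) (p' t), w⟫ = ⟪g, p' t⟫ := by
        rw [hsymm (p t) (p' t) w, hHw]
      have h3 : ⟪g, w⟫ = ⟪w, g⟫ := real_inner_comm _ _
      rw [h2, h3]
      ring
    have hsplit : (∫ t in (0:ℝ)..T,
        ((1 / 2) * ⟪Hinv (p t) (gradient f (p t)), gradient f (p t)⟫
          + (1 / 2) * ⟪H (p t) (p' t), p' t⟫))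
        = (1 / 2) * (∫ t in (0:ℝ)..T,
            ⟪H (p t) (p' t + Hinv (p t) (gradient f (p t))),
              p' t + Hinv (p t) (gradient f (p t))⟫)
          - ∫ t in (0:ℝ)..T, ⟪gradient f (p t), p' t⟫ := by
      rw [← intervalIntegral.integral_const_mul, ← intervalIntegral.integral_sub
        (hQi.const_mul _) hBi]
      exact intervalIntegral.integral_congr fun t _ => hpt t
    unfold newtonAction
    rw [hsplit, hftc]
    ring
  have key₁ := key x x' hx hx'
  rw [hx0] at key₁
  refine ⟨key₁, ?_, ?_⟩
  · rw [key₁]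
    have hnn : (0:ℝ) ≤ ∫ t in (0:ℝ)..T,
        ⟪H (x t) (x' t + Hinv (x t) (gradient f (x t))),
          x' t + Hinv (x t) (gradient f (x t))⟫ := by
      apply intervalIntegral.integral_nonneg hT.le
      intro u hu
      rcases eq_or_ne (x' u + Hinv (x u) (gradient f (x u))) 0 with h | h
      · rw [h]; simp
      · exact (hpos _ _ h).le
    nlinarith
  · intro hxs
    have hxs'c : ContinuousOn (fun t => -(Hinv (xs t) (gradient f (xs t))))
        (Set.Icc (0 : ℝ) T) := by
      have hxsc : ContinuousOn xs (Set.Icc (0 : ℝ) T) :=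
        fun t ht => ((hxs t ht).continuousAt).continuousWithinAt
      exact (((hHinvc.comp_continuousOn hxsc)).clm_apply
        (hgc.comp_continuousOn hxsc)).neg
    have key₂ := key xs (fun t => -(Hinv (xs t) (gradient f (xs t)))) hxs hxs'c
    rw [hxs0] at key₂
    rw [key₂]
    have : (∫ t in (0:ℝ)..T,
        ⟪H (xs t) (-(Hinv (xs t) (gradient f (xs t))) + Hinv (xs t) (gradient f (xs t))),
          -(Hinv (xs t) (gradient f (xs t))) + Hinv (xs t) (gradient f (xs t))⟫) = 0 := by
      have : ∀ t, (⟪H (xs t) (-(Hinv (xs t) (gradient f (xs t))) + Hinv (xs t) (gradient f (xs t))),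
          -(Hinv (xs t) (gradient f (xs t))) + Hinv (xs t) (gradient f (xs t))⟫ : ℝ) = 0 := by
        intro t
        rw [neg_add_cancel]
        simp
      simp only [this]
      simp
    rw [this]
    ring
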